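/- Fix μ ∈ (0,1) and let a ∈ ℝ. If for every k > 0 the PGN(μ,k) distribution is symmetric about a — that is, the pushforward of PGN(μ,k) under the map x ↦ 2a − x equals PGN(μ,k) for every k > 0 — then a = 0. -/

import Mathlib

open MeasureTheory Real Set

/-- Density of the chi-squared distribution with `k` degrees of freedom. -/
noncomputable def chiSqDensity (k : ℝ) (v : ℝ) : ℝ :=
  if 0 < v then v ^ (k / 2 - 1) * Real.exp (-v / 2) / ((2 : ℝ) ^ (k / 2) * Real.Gamma (k / 2))
  else 0

/-- The Beta function `B(a,b) = Γ(a)Γ(b)/Γ(a+b)`. -/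
noncomputable def realBeta (a b : ℝ) : ℝ := Real.Gamma a * Real.Gamma b / Real.Gamma (a + b)

/-- Density of the Beta(2μ, 2(1-μ)) distribution. -/
noncomputable def betaDensity (μ : ℝ) (u : ℝ) : ℝ :=
  if 0 < u ∧ u < 1 then
    u ^ (2 * μ - 1) * (1 - u) ^ (1 - 2 * μ) / realBeta (2 * μ) (2 * (1 - μ))
  else 0

/-- The chi-squared distribution with `k` degrees of freedom, as a measure on ℝ. -/
noncomputable def chiSqMeasure (k : ℝ) : Measure ℝ :=
  volume.withDensity (fun v => ENNReal.ofReal (chiSqDensity k v))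

/-- The Beta(2μ, 2(1-μ)) distribution, as a measure on ℝ. -/
noncomputable def betaMeasure (μ : ℝ) : Measure ℝ :=
  volume.withDensity (fun u => ENNReal.ofReal (betaDensity μ u))

/-- The polar-generalized normal distribution PGN(μ, k): the pushforward of
(chi-squared k) ⊗ (Beta(2μ, 2(1-μ))) under `(v, u) ↦ √v · cos (π u)`. -/
noncomputable def PGN (μ k : ℝ) : Measure ℝ :=
  Measure.map (fun p : ℝ × ℝ => Real.sqrt p.1 * Real.cos (π * p.2))
    ((chiSqMeasure k).prod (betaMeasure μ))

/-! ### Auxiliary lemmas -/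

lemma aux_rpow_le_two {x q : ℝ} (hx : 1/2 ≤ x) (hx1 : x ≤ 1) (hq1 : -1 ≤ q) (_hq2 : q ≤ 1) :
    x ^ q ≤ 2 := by
  have hx0 : (0:ℝ) < x := by linarith
  rcases le_or_gt 0 q with hq | hq
  · calc x ^ q ≤ 1 := Real.rpow_le_one hx0.le hx1 hq
    _ ≤ 2 := one_le_two
  · have hinv : x⁻¹ ≤ 2 := by
      rw [inv_eq_one_div, div_le_iff₀ hx0]; linarith
    have hxq : x ^ q = (x⁻¹) ^ (-q) := by
      rw [Real.inv_rpow hx0.le, Real.rpow_neg hx0.le, inv_inv]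
    calc x ^ q = (x⁻¹) ^ (-q) := hxq
      _ ≤ 2 ^ (-q) := Real.rpow_le_rpow (inv_nonneg.2 hx0.le) hinv (by linarith)
      _ ≤ 2 ^ (1:ℝ) := Real.rpow_le_rpow_of_exponent_le one_le_two (by linarith)
      _ = 2 := Real.rpow_one 2

lemma measurable_chiSqDensity (k : ℝ) : Measurable (chiSqDensity k) := by
  unfold chiSqDensity
  refine Measurable.ite (measurableSet_Ioi (a := (0:ℝ))) ?_ measurable_const
  exact ((measurable_id.pow measurable_const).mul
    ((measurable_id.neg.div_const 2).exp)).div_const _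

lemma measurable_betaDensity (μ : ℝ) : Measurable (betaDensity μ) := by
  unfold betaDensity
  refine Measurable.ite ?_ ?_ measurable_const
  · show MeasurableSet (Ioo (0:ℝ) 1)
    exact measurableSet_Ioo
  · exact ((measurable_id.pow measurable_const).mul
      ((measurable_const.sub measurable_id).pow measurable_const)).div_const _

lemma ae_ne_zero : ∀ᵐ v : ℝ, v ≠ 0 := by
  rw [ae_iff]
  simp [Real.volume_singleton]

lemma chiSqDensity_nonneg {k : ℝ} (hk : 0 < k) (v : ℝ) : 0 ≤ chiSqDensity k v := by
  unfold chiSqDensity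
  split
  · apply div_nonneg
    · positivity
    · exact mul_nonneg (Real.rpow_pos_of_pos two_pos _).le
        (Real.Gamma_pos_of_pos (by positivity)).le
  · exact le_refl 0

lemma chiSq_eq_gamma {k : ℝ} (hk : 0 < k) :
    chiSqMeasure k = ProbabilityTheory.gammaMeasure (k/2) (1/2) := by
  unfold chiSqMeasure ProbabilityTheory.gammaMeasure
  apply withDensity_congr_ae
  filter_upwards [ae_ne_zero] with v hv
  rcases lt_or_gt_of_ne hv with hneg | hpos
  · rw [ProbabilityTheory.gammaPDF_of_neg hneg, chiSqDensity, if_neg (not_lt.2 hneg.le)]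
    simp
  · rw [ProbabilityTheory.gammaPDF_of_nonneg hpos.le, chiSqDensity, if_pos hpos]
    congr 1
    have h2 : ((1:ℝ)/2) ^ (k/2) = ((2:ℝ) ^ (k/2))⁻¹ := by
      rw [one_div, Real.inv_rpow (by norm_num : (0:ℝ) ≤ 2)]
    have hG : Real.Gamma (k/2) ≠ 0 := (Real.Gamma_pos_of_pos (by positivity)).ne'
    have h2' : ((2:ℝ)) ^ (k/2) ≠ 0 := (Real.rpow_pos_of_pos two_pos _).ne'
    rw [h2, show -(1/2 * v) = -v/2 by ring]
    field_simp

lemma isProbabilityMeasure_chiSq {k : ℝ} (hk : 0 < k) :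
    IsProbabilityMeasure (chiSqMeasure k) := by
  rw [chiSq_eq_gamma hk]
  exact ProbabilityTheory.isProbabilityMeasure_gammaMeasure (by positivity) (by norm_num)

lemma integrable_gammaPDFReal {a r : ℝ} (ha : 0 < a) (hr : 0 < r) :
    Integrable (ProbabilityTheory.gammaPDFReal a r) := by
  refine ⟨(ProbabilityTheory.measurable_gammaPDFReal a r).aestronglyMeasurable, ?_⟩
  rw [hasFiniteIntegral_iff_ofReal
    (ae_of_all _ (ProbabilityTheory.gammaPDFReal_nonneg ha hr))]
  have : (fun x => ENNReal.ofReal (ProbabilityTheory.gammaPDFReal a r x)) =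
      ProbabilityTheory.gammaPDF a r := rfl
  rw [this, ProbabilityTheory.lintegral_gammaPDF_eq_one ha hr]
  exact ENNReal.one_lt_top

lemma integral_gammaPDFReal {a r : ℝ} (ha : 0 < a) (hr : 0 < r) :
    ∫ x, ProbabilityTheory.gammaPDFReal a r x = 1 := by
  rw [integral_eq_lintegral_of_nonneg_ae
    (ae_of_all _ (ProbabilityTheory.gammaPDFReal_nonneg ha hr))
    (ProbabilityTheory.measurable_gammaPDFReal a r).aestronglyMeasurable]
  have : (fun x => ENNReal.ofReal (ProbabilityTheory.gammaPDFReal a r x)) =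
      ProbabilityTheory.gammaPDF a r := rfl
  rw [this, ProbabilityTheory.lintegral_gammaPDF_eq_one ha hr]
  simp

lemma sqrt_mul_chiSq_ae {k : ℝ} (hk : 0 < k) :
    (fun v => chiSqDensity k v * Real.sqrt v) =ᵐ[volume]
    (fun v => (Real.sqrt 2 * Real.Gamma ((k+1)/2) / Real.Gamma (k/2)) *
      ProbabilityTheory.gammaPDFReal ((k+1)/2) (1/2) v) := by
  filter_upwards [ae_ne_zero] with v hv
  rcases lt_or_gt_of_ne hv with hneg | hpos
  · rw [chiSqDensity, if_neg (not_lt.2 hneg.le), ProbabilityTheory.gammaPDFReal,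
      if_neg (not_le.2 hneg)]
    simp
  · rw [chiSqDensity, if_pos hpos, ProbabilityTheory.gammaPDFReal, if_pos hpos.le]
    have hG : Real.Gamma (k/2) ≠ 0 := (Real.Gamma_pos_of_pos (by positivity)).ne'
    have hG' : Real.Gamma ((k+1)/2) ≠ 0 := (Real.Gamma_pos_of_pos (by positivity)).ne'
    have h2 : ((2:ℝ)) ^ (k/2) ≠ 0 := (Real.rpow_pos_of_pos two_pos _).ne'
    have hsq : Real.sqrt v = v ^ ((1:ℝ)/2) := Real.sqrt_eq_rpow v
    have hsq2 : Real.sqrt 2 = (2:ℝ) ^ ((1:ℝ)/2) := Real.sqrt_eq_rpow 2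
    have hv1 : v ^ ((k+1)/2 - 1) = v ^ (k/2 - 1) * v ^ ((1:ℝ)/2) := by
      rw [← Real.rpow_add hpos]; ring_nf
    have h12 : ((1:ℝ)/2) ^ ((k+1)/2) = ((2:ℝ) ^ ((k+1)/2))⁻¹ := by
      rw [one_div, Real.inv_rpow (by norm_num : (0:ℝ) ≤ 2)]
    have h2add : (2:ℝ) ^ ((k+1)/2) = (2:ℝ) ^ (k/2) * (2:ℝ) ^ ((1:ℝ)/2) := by
      rw [← Real.rpow_add two_pos]; ring_nf
    have h2half : ((2:ℝ)) ^ ((1:ℝ)/2) ≠ 0 := (Real.rpow_pos_of_pos two_pos _).ne'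
    rw [hsq, hsq2, h12, h2add, show -(1/2 * v) = -v/2 by ring, hv1]
    field_simp

lemma integral_sqrt_chiSq {k : ℝ} (hk : 0 < k) :
    ∫ v, Real.sqrt v ∂(chiSqMeasure k) =
      Real.sqrt 2 * Real.Gamma ((k+1)/2) / Real.Gamma (k/2) := by
  have hrfl : chiSqMeasure k =
      volume.withDensity (fun v => ((Real.toNNReal (chiSqDensity k v) : NNReal) : ENNReal)) := rfl
  rw [hrfl, integral_withDensity_eq_integral_smul
    (measurable_chiSqDensity k).real_toNNReal Real.sqrt]
  have heq : (fun v => (Real.toNNReal (chiSqDensity k v)) • Real.sqrt v) =ᵐ[volume]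
      (fun v => (Real.sqrt 2 * Real.Gamma ((k+1)/2) / Real.Gamma (k/2)) *
        ProbabilityTheory.gammaPDFReal ((k+1)/2) (1/2) v) := by
    filter_upwards [sqrt_mul_chiSq_ae hk] with v hv
    rw [NNReal.smul_def, Real.coe_toNNReal _ (chiSqDensity_nonneg hk v)]
    exact hv
  rw [integral_congr_ae heq, integral_const_mul,
    integral_gammaPDFReal (by positivity) (by norm_num), mul_one]

lemma integrable_sqrt_chiSq {k : ℝ} (hk : 0 < k) :
    Integrable Real.sqrt (chiSqMeasure k) := by
  rw [chiSqMeasure, integrable_withDensity_iff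
    ((measurable_chiSqDensity k).ennreal_ofReal)
    (ae_of_all _ fun _ => ENNReal.ofReal_lt_top)]
  have heq : (fun v => (Real.sqrt 2 * Real.Gamma ((k+1)/2) / Real.Gamma (k/2)) *
      ProbabilityTheory.gammaPDFReal ((k+1)/2) (1/2) v) =ᵐ[volume]
      (fun v => Real.sqrt v * (ENNReal.ofReal (chiSqDensity k v)).toReal) := by
    filter_upwards [sqrt_mul_chiSq_ae hk] with v hv
    rw [ENNReal.toReal_ofReal (chiSqDensity_nonneg hk v)]
    linear_combination -hv
  exact ((integrable_gammaPDFReal (by positivity) (by norm_num)).const_mul _).congr heq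

/-! ### Beta measure facts -/

lemma realBeta_pos {μ : ℝ} (hμ : μ ∈ Set.Ioo (0:ℝ) 1) :
    0 < realBeta (2 * μ) (2 * (1 - μ)) := by
  obtain ⟨h0, h1⟩ := hμ
  unfold realBeta
  apply div_pos
  · exact mul_pos (Real.Gamma_pos_of_pos (by linarith)) (Real.Gamma_pos_of_pos (by linarith))
  · exact Real.Gamma_pos_of_pos (by linarith)

lemma betaDensity_nonneg {μ : ℝ} (hμ : μ ∈ Set.Ioo (0:ℝ) 1) (u : ℝ) :
    0 ≤ betaDensity μ u := by
  unfold betaDensity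
  split
  case isTrue h =>
    apply div_nonneg
    · exact mul_nonneg (Real.rpow_nonneg h.1.le _) (Real.rpow_nonneg (by linarith [h.2]) _)
    · exact (realBeta_pos hμ).le
  case isFalse h => exact le_refl 0

lemma betaDensity_eq_indicator (μ : ℝ) : betaDensity μ = Set.indicator (Ioo (0:ℝ) 1)
    (fun u => u ^ (2*μ-1) * (1-u) ^ (1-2*μ) / realBeta (2 * μ) (2 * (1 - μ))) := by
  funext u
  by_cases h : 0 < u ∧ u < 1
  · rw [betaDensity, if_pos h, Set.indicator_of_mem (by exact h)]
  · rw [betaDensity, if_neg h, Set.indicator_of_notMem (by simpa [Set.mem_Ioo] using h)]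

lemma integrable_betaDensity {μ : ℝ} (hμ : μ ∈ Set.Ioo (0:ℝ) 1) :
    Integrable (betaDensity μ) := by
  obtain ⟨h0, h1⟩ := hμ
  set p := 2 * μ - 1 with hp
  set q := 1 - 2 * μ with hq
  set K := realBeta (2 * μ) (2 * (1 - μ)) with hK
  have hKpos : 0 < K := realBeta_pos ⟨h0, h1⟩
  rw [betaDensity_eq_indicator, integrable_indicator_iff measurableSet_Ioo]
  have hmeas : AEStronglyMeasurable (fun u : ℝ => u ^ p * (1-u) ^ q / K) volume :=
    (((measurable_id.pow measurable_const).mul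
      ((measurable_const.sub measurable_id).pow measurable_const)).div_const _).aestronglyMeasurable
  have hsub : Ioo (0:ℝ) 1 ⊆ Ioc (0:ℝ) (1/2) ∪ Ioc (1/2) 1 := by
    rw [Set.Ioc_union_Ioc_eq_Ioc (by norm_num) (by norm_num)]
    exact Ioo_subset_Ioc_self
  refine IntegrableOn.mono_set ?_ hsub
  apply IntegrableOn.union
  · -- on (0, 1/2]
    have hmaj : IntegrableOn (fun u : ℝ => u ^ p * 2 / K) (Ioc (0:ℝ) (1/2)) := by
      have h' := ((intervalIntegral.intervalIntegrable_rpow' (r := p) (by rw [hp]; linarith)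
        (a := 0) (b := 1/2)).mul_const 2).div_const K
      rwa [intervalIntegrable_iff, uIoc_of_le (by norm_num)] at h'
    refine Integrable.mono' hmaj hmeas.restrict ?_
    rw [ae_restrict_iff' measurableSet_Ioc]
    refine ae_of_all _ fun u hu => ?_
    obtain ⟨hu0, hu2⟩ := hu
    have h1u : (0:ℝ) < 1 - u := by linarith
    have hnn : 0 ≤ u ^ p * (1-u) ^ q / K :=
      div_nonneg (mul_nonneg (Real.rpow_nonneg hu0.le _) (Real.rpow_nonneg h1u.le _)) hKpos.le
    rw [Real.norm_of_nonneg hnn]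
    have hb : (1-u) ^ q ≤ 2 :=
      aux_rpow_le_two (by linarith) (by linarith) (by rw [hq]; linarith) (by rw [hq]; linarith)
    gcongr
    all_goals first | exact hb | exact Real.rpow_nonneg hu0.le _ | positivity
  · -- on (1/2, 1]
    have hmaj : IntegrableOn (fun u : ℝ => 2 * (1-u) ^ q / K) (Ioc (1/2:ℝ) 1) := by
      have h0' : IntervalIntegrable (fun x : ℝ => x ^ q) volume (1/2) 0 :=
        intervalIntegral.intervalIntegrable_rpow' (by rw [hq]; linarith)
      have h1' := ((h0'.comp_sub_left 1).const_mul 2).div_const K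
      have h2' := intervalIntegrable_iff.mp h1'
      rw [uIoc_of_le (by norm_num)] at h2'
      have hset : Ioc ((1:ℝ) - 1/2) (1 - 0) = Ioc (1/2:ℝ) 1 := by norm_num
      rwa [hset] at h2'
    refine Integrable.mono' hmaj hmeas.restrict ?_
    rw [ae_restrict_iff' measurableSet_Ioc]
    refine ae_of_all _ fun u hu => ?_
    obtain ⟨hu2, hu1⟩ := hu
    have hu0 : (0:ℝ) < u := by linarith
    have h1u : (0:ℝ) ≤ 1 - u := by linarith
    have hnn : 0 ≤ u ^ p * (1-u) ^ q / K :=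
      div_nonneg (mul_nonneg (Real.rpow_nonneg hu0.le _) (Real.rpow_nonneg h1u _)) hKpos.le
    rw [Real.norm_of_nonneg hnn]
    have hb : u ^ p ≤ 2 :=
      aux_rpow_le_two (by linarith) (by linarith) (by rw [hp]; linarith) (by rw [hp]; linarith)
    gcongr
    all_goals first | exact hb | exact Real.rpow_nonneg h1u _ | positivity

lemma isFiniteMeasure_beta {μ : ℝ} (hμ : μ ∈ Set.Ioo (0:ℝ) 1) :
    IsFiniteMeasure (betaMeasure μ) := by
  constructor
  rw [betaMeasure, withDensity_apply _ MeasurableSet.univ, Measure.restrict_univ]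
  exact (integrable_betaDensity hμ).lintegral_lt_top

lemma betaMeasure_univ_ne_zero {μ : ℝ} (hμ : μ ∈ Set.Ioo (0:ℝ) 1) :
    betaMeasure μ Set.univ ≠ 0 := by
  obtain ⟨h0, h1⟩ := hμ
  rw [betaMeasure, withDensity_apply _ MeasurableSet.univ, Measure.restrict_univ]
  rw [← pos_iff_ne_zero,
    lintegral_pos_iff_support ((measurable_betaDensity μ).ennreal_ofReal)]
  have hsub : Ioo (0:ℝ) 1 ⊆ Function.support fun u => ENNReal.ofReal (betaDensity μ u) := by
    intro u hu
    obtain ⟨hu0, hu1⟩ := hu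
    have hpos : 0 < betaDensity μ u := by
      rw [betaDensity, if_pos ⟨hu0, hu1⟩]
      apply div_pos
      · exact mul_pos (Real.rpow_pos_of_pos hu0 _) (Real.rpow_pos_of_pos (by linarith) _)
      · exact realBeta_pos ⟨h0, h1⟩
    simp only [Function.mem_support, ne_eq, ENNReal.ofReal_eq_zero, not_le]
    exact hpos
  calc (0:ENNReal) < volume (Ioo (0:ℝ) 1) := by simp [Real.volume_Ioo]
    _ ≤ _ := measure_mono hsub

theorem stmt11 (μ : ℝ) (hμ : μ ∈ Set.Ioo (0:ℝ) 1) (a : ℝ)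
    (h : ∀ k : ℝ, 0 < k → Measure.map (fun x : ℝ => 2 * a - x) (PGN μ k) = PGN μ k) :
    a = 0 := by
  haveI hbfin : IsFiniteMeasure (betaMeasure μ) := isFiniteMeasure_beta hμ
  set c : ℝ := ∫ u, Real.cos (π * u) ∂(betaMeasure μ) with hc
  set b : ℝ := ((betaMeasure μ) Set.univ).toReal with hbdef
  have key : ∀ k : ℝ, 0 < k →
      (Real.sqrt 2 * Real.Gamma ((k+1)/2) / Real.Gamma (k/2)) * c = a * b := by
    intro k hk
    haveI : IsProbabilityMeasure (chiSqMeasure k) := isProbabilityMeasure_chiSq hk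
    have hg : Measurable (fun p : ℝ × ℝ => Real.sqrt p.1 * Real.cos (π * p.2)) :=
      (Real.continuous_sqrt.measurable.comp measurable_fst).mul
        ((Real.continuous_cos.measurable).comp
          ((measurable_const.mul measurable_id).comp measurable_snd))
    have hint_cos : Integrable (fun u => Real.cos (π * u)) (betaMeasure μ) := by
      refine Integrable.mono' (integrable_const 1)
        ((Real.continuous_cos.measurable.comp
          (measurable_const.mul measurable_id)).aestronglyMeasurable)
        (ae_of_all _ fun u => ?_)
      rw [Real.norm_eq_abs]
      exact Real.abs_cos_le_one _
    have hintg : Integrable (fun p : ℝ × ℝ => Real.sqrt p.1 * Real.cos (π * p.2))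
        ((chiSqMeasure k).prod (betaMeasure μ)) :=
      (integrable_sqrt_chiSq hk).mul_prod hint_cos
    have hasm : AEStronglyMeasurable (fun x : ℝ => x)
        (Measure.map (fun p : ℝ × ℝ => Real.sqrt p.1 * Real.cos (π * p.2))
          ((chiSqMeasure k).prod (betaMeasure μ))) := aestronglyMeasurable_id
    have hasm2 : AEStronglyMeasurable (fun x : ℝ => x)
        (Measure.map (fun x : ℝ => 2 * a - x) (PGN μ k)) := aestronglyMeasurable_id
    have hint_id : Integrable (fun x : ℝ => x) (PGN μ k) := by
      rw [PGN, integrable_map_measure hasm hg.aemeasurable]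
      exact hintg
    haveI hfin : IsFiniteMeasure (PGN μ k) := by
      constructor
      rw [PGN, Measure.map_apply hg MeasurableSet.univ, Set.preimage_univ]
      exact measure_lt_top _ _
    have hE : ∫ x, x ∂(PGN μ k) =
        (∫ v, Real.sqrt v ∂(chiSqMeasure k)) * c := by
      rw [PGN, integral_map hg.aemeasurable hasm]
      exact integral_prod_mul (fun v => Real.sqrt v) (fun u => Real.cos (π * u))
    have hmass : ((PGN μ k) Set.univ).toReal = b := by
      rw [PGN, Measure.map_apply hg MeasurableSet.univ, Set.preimage_univ,
        ← Set.univ_prod_univ, Measure.prod_prod, measure_univ, one_mul]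
    have hsym : ∫ x, x ∂(PGN μ k) = ∫ x, (2 * a - x) ∂(PGN μ k) := by
      conv_lhs => rw [← h k hk]
      have hf2 : Measurable (fun x : ℝ => 2 * a - x) := measurable_const.sub measurable_id
      rw [integral_map hf2.aemeasurable hasm2]
    rw [integral_sub (integrable_const _) hint_id, integral_const, measureReal_def, hmass, smul_eq_mul] at hsym
    have hEa : ∫ x, x ∂(PGN μ k) = a * b := by linarith
    rw [hE, integral_sqrt_chiSq hk] at hEa
    exact hEa
  have h1 := key 1 one_pos
  have h3 := key 3 (by norm_num)
  have e1 : ((1:ℝ)+1)/2 = 1 := by norm_num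
  have e2 : ((3:ℝ)+1)/2 = 2 := by norm_num
  have e3 : ((3:ℝ))/2 = 1/2 + 1 := by norm_num
  rw [e1, Real.Gamma_one, Real.Gamma_one_half_eq] at h1
  rw [e2, e3, Real.Gamma_two, Real.Gamma_add_one (by norm_num), Real.Gamma_one_half_eq] at h3
  have hπ : (0:ℝ) < Real.sqrt π := Real.sqrt_pos.2 Real.pi_pos
  have hs2 : (0:ℝ) < Real.sqrt 2 := Real.sqrt_pos.2 two_pos
  have hab : a * b = 0 := by
    have h2x : Real.sqrt 2 * 1 / (1/2 * Real.sqrt π) * c =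
        2 * (Real.sqrt 2 * 1 / Real.sqrt π * c) := by
      field_simp
    rw [h2x, h1] at h3
    linarith
  have hb0 : 0 < b := by
    rw [hbdef]
    exact ENNReal.toReal_pos (betaMeasure_univ_ne_zero hμ) (measure_lt_top _ _).ne
  rcases mul_eq_zero.1 hab with h' | h'
  · exact h'
  · exact absurd h' hb0.ne'
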